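/- arXiv:1905.00827 — 2 statements merged into one kernel-verified Lean document; each statement's English description precedes it below -/
import Mathlib

section
/- Let V be a Zariski closed subset of (ℂˣ)ⁿ and let X be a weakly atypical subvariety of V, i.e. X is an irreducible component of V ∩ T for some weakly special subvariety T of (ℂˣ)ⁿ with dim X > dim V + dim T − n. Then X is an irreducible component of V ∩ ⟨X⟩_ws and dim X > dim V + dim ⟨X⟩_ws − n, where ⟨X⟩_ws is the weakly special closure of X. -/
open scoped Pointwise

noncomputable section

/-- The algebraic torus `(ℂˣ)ⁿ`. -/
abbrev Torus (n : ℕ) : Type := Fin n → ℂˣ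

namespace ZP

/-- The natural embedding of the torus into affine `n`-space. -/
def tEmbed {n : ℕ} : Torus n → (Fin n → ℂ) := fun x i => (x i : ℂ)

/-- The zero locus in affine space of an ideal of polynomials. -/
def affZeroLocus {k : ℕ} (I : Ideal (MvPolynomial (Fin k) ℂ)) : Set (Fin k → ℂ) :=
  {x | ∀ p ∈ I, MvPolynomial.eval x p = 0}

/-- Zariski closed subsets of affine space `ℂᵏ`. -/
def IsAClosed {k : ℕ} (V : Set (Fin k → ℂ)) : Prop :=
  ∃ I : Ideal (MvPolynomial (Fin k) ℂ), V = affZeroLocus I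

/-- Zariski closed subsets of the torus `(ℂˣ)ⁿ`: traces on the torus of
Zariski closed subsets of affine space. -/
def IsTClosed {n : ℕ} (V : Set (Torus n)) : Prop :=
  ∃ I : Ideal (MvPolynomial (Fin n) ℂ), V = tEmbed ⁻¹' affZeroLocus I

/-- Irreducibility with respect to the Zariski topology on the torus. -/
def TIrred {n : ℕ} (X : Set (Torus n)) : Prop :=
  X.Nonempty ∧ ∀ C₁ C₂ : Set (Torus n), IsTClosed C₁ → IsTClosed C₂ →
    X ⊆ C₁ ∪ C₂ → X ⊆ C₁ ∨ X ⊆ C₂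

/-- Zariski closure in the torus. -/
def tclosure {n : ℕ} (S : Set (Torus n)) : Set (Torus n) := ⋂₀ {C | IsTClosed C ∧ S ⊆ C}

/-- Krull dimension (w.r.t. the Zariski topology) of a subset of the torus:
the Krull dimension of the poset of irreducible Zariski closed subsets of its
Zariski closure. -/
def tdim {n : ℕ} (S : Set (Torus n)) : WithBot ℕ∞ :=
  Order.krullDim {C : Set (Torus n) // IsTClosed C ∧ TIrred C ∧ C ⊆ tclosure S}

/-- `X` is an irreducible component of `A` (in the Zariski topology):
a maximal irreducible Zariski closed subset of `A`. -/
def IsCompOf {n : ℕ} (X A : Set (Torus n)) : Prop :=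
  IsTClosed X ∧ TIrred X ∧ X ⊆ A ∧
    ∀ Y : Set (Torus n), IsTClosed Y → TIrred Y → X ⊆ Y → Y ⊆ A → Y = X

/-- An algebraic subgroup of the torus is a Zariski closed subgroup. -/
def IsAlgSubgroup {n : ℕ} (H : Subgroup (Torus n)) : Prop := IsTClosed (H : Set (Torus n))

/-- Weakly special subvarieties of the torus: cosets of irreducible algebraic subgroups. -/
def WeaklySpecial {n : ℕ} (T : Set (Torus n)) : Prop :=
  ∃ (g : Torus n) (H : Subgroup (Torus n)), IsAlgSubgroup H ∧ TIrred (H : Set (Torus n)) ∧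
    T = g • (H : Set (Torus n))

/-- Special subvarieties of the torus: torsion cosets of irreducible algebraic subgroups. -/
def Special {n : ℕ} (T : Set (Torus n)) : Prop :=
  ∃ (g : Torus n) (H : Subgroup (Torus n)), IsOfFinOrder g ∧ IsAlgSubgroup H ∧
    TIrred (H : Set (Torus n)) ∧ T = g • (H : Set (Torus n))

/-- `Γ`-special subvarieties: weakly special subvarieties containing a point of `Γ`. -/
def GammaSpecial {n : ℕ} (Γ : Set (Torus n)) (T : Set (Torus n)) : Prop :=
  WeaklySpecial T ∧ (T ∩ Γ).Nonempty

/-- The weakly special closure of a set: the smallest weakly special subvariety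
containing it (realised as the intersection of all of them). -/
def wsClosure {n : ℕ} (X : Set (Torus n)) : Set (Torus n) :=
  ⋂₀ {W | WeaklySpecial W ∧ X ⊆ W}

/-- The special closure of a set. -/
def spClosure {n : ℕ} (X : Set (Torus n)) : Set (Torus n) :=
  ⋂₀ {W | Special W ∧ X ⊆ W}

/-- A subgroup `Γ` has finite rank if `dim_ℚ (Γ ⊗_ℤ ℚ)` is finite. -/
def FiniteRank {n : ℕ} (Γ : Subgroup (Torus n)) : Prop :=
  Module.Finite ℚ (TensorProduct ℤ ℚ (Additive Γ))

/-- `X` is a `Γ`-atypical subvariety of `V` (in the ambient torus `(ℂˣ)ⁿ`):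
an atypical component of the intersection of `V` with some weakly special
subvariety, whose weakly special closure is `Γ`-special. -/
def GammaAtypical {n : ℕ} (Γ V X : Set (Torus n)) : Prop :=
  (∃ T : Set (Torus n), WeaklySpecial T ∧ IsCompOf X (V ∩ T) ∧
    tdim X + (n : WithBot ℕ∞) > tdim V + tdim T) ∧
  GammaSpecial Γ (wsClosure X)

/-- `X` is a `Γ`-atypical subvariety of `V` in `S`. -/
def GammaAtypicalIn {n : ℕ} (Γ S V X : Set (Torus n)) : Prop :=
  (∃ T : Set (Torus n), WeaklySpecial T ∧ T ⊆ S ∧ IsCompOf X (V ∩ T) ∧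
    tdim X + tdim S > tdim V + tdim T) ∧
  GammaSpecial Γ (wsClosure X)


lemma tclosure_mono {n : ℕ} {S₁ S₂ : Set (Torus n)} (h : S₁ ⊆ S₂) :
    tclosure S₁ ⊆ tclosure S₂ := by
  intro x hx
  intro C hC
  exact hx C ⟨hC.1, h.trans hC.2⟩

lemma tdim_mono {n : ℕ} {S₁ S₂ : Set (Torus n)} (h : S₁ ⊆ S₂) : tdim S₁ ≤ tdim S₂ := by
  have hc := tclosure_mono h
  exact Order.krullDim_le_of_strictMono
    (fun C => ⟨C.1, C.2.1, C.2.2.1, C.2.2.2.trans hc⟩)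
    (fun a b hab => hab)

/-- **Lemma 2.1** (torus case). If `X` is a weakly atypical subvariety of `V`,
i.e. an atypical component of `V ∩ T` for some weakly special `T`, then `X` is
an (atypical) component of `V ∩ ⟨X⟩_ws`, where `⟨X⟩_ws` is the weakly special
closure of `X`. -/
theorem ws_closure_atypical {n : ℕ} (V T X : Set (Torus n)) (hV : IsTClosed V)
    (hT : WeaklySpecial T) (hX : IsCompOf X (V ∩ T))
    (hatyp : tdim X + (n : WithBot ℕ∞) > tdim V + tdim T) :
    IsCompOf X (V ∩ wsClosure X) ∧
      tdim X + (n : WithBot ℕ∞) > tdim V + tdim (wsClosure X) := by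
  have hXT : X ⊆ T := hX.2.2.1.trans Set.inter_subset_right
  have hwsT : wsClosure X ⊆ T := Set.sInter_subset_of_mem ⟨hT, hXT⟩
  have hXws : X ⊆ wsClosure X := fun x hx W hW => hW.2 hx
  constructor
  · refine ⟨hX.1, hX.2.1, Set.subset_inter (hX.2.2.1.trans Set.inter_subset_left) hXws, ?_⟩
    intro Y hYc hYi hXY hYsub
    exact hX.2.2.2 Y hYc hYi hXY (hYsub.trans (Set.inter_subset_inter_right V hwsT))
  · calc tdim V + tdim (wsClosure X) ≤ tdim V + tdim T := by
          exact add_le_add_right (tdim_mono hwsT) _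
      _ < tdim X + (n : WithBot ℕ∞) := hatyp

end ZP
end
end

section
/- Let γ ∈ ℂˣ be transcendental over ℚ. Let Γ₁ be the torsion subgroup of ℂˣ, let Γ₂ = { x ∈ ℂˣ : xᵐ ∈ ⟨γ⟩ for some integer m ≥ 1 } be the division closure of the cyclic subgroup generated by γ, and let Γ = Γ₁ × Γ₂ ⊆ (ℂˣ)². Set S = { (y₁,y₂) ∈ (ℂˣ)² : y₁y₂ = γ } and T = { (y₁,y₂) ∈ (ℂˣ)² : y₁²y₂ = γ² }. Then: (i) S and T each contain a point of Γ (namely (1,γ) ∈ S and (1,γ²) ∈ T), so S and T are Γ-special; (ii) S ∩ T = { (γ, 1) }; and (iii) (γ,1) ∉ Γ, since γ is not a root of unity. In particular, the intersection of two Γ-special subvarieties of (ℂˣ)² need not contain a point of Γ, so the irreducible components of such intersections need not be Γ-special. -/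
open scoped Pointwise

noncomputable section

namespace ZP

/-- The subgroup `{y | y₀ᵏ y₁ = 1}` of `(ℂˣ)²`. -/
def Hsub (k : ℕ) : Subgroup (Torus 2) where
  carrier := {y | y 0 ^ k * y 1 = 1}
  one_mem' := by simp
  mul_mem' := by
    intro a b ha hb
    simp only [Set.mem_setOf_eq, Pi.mul_apply, mul_pow] at *
    rw [mul_mul_mul_comm, ha, hb, mul_one]
  inv_mem' := by
    intro a ha
    simp only [Set.mem_setOf_eq, Pi.inv_apply, inv_pow] at *
    rw [← mul_inv, ha, inv_one]

lemma mem_Hsub {k : ℕ} {y : Torus 2} : y ∈ Hsub k ↔ y 0 ^ k * y 1 = 1 := Iff.rfl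

lemma Hsub_eq_range (k : ℕ) :
    (Hsub k : Set (Torus 2)) = Set.range (fun t : ℂˣ => (![t, (t⁻¹) ^ k] : Torus 2)) := by
  ext y
  constructor
  · intro hy
    refine ⟨y 0, ?_⟩
    have h1 : y 1 = ((y 0)⁻¹) ^ k := by
      rw [inv_pow]
      exact eq_inv_of_mul_eq_one_left (by rw [mul_comm]; exact mem_Hsub.mp hy)
    funext i
    fin_cases i <;> simp [h1]
  · rintro ⟨t, rfl⟩
    simp [mem_Hsub, inv_pow]

lemma Hsub_closed (k : ℕ) : IsTClosed (Hsub k : Set (Torus 2)) := by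
  refine ⟨Ideal.span {(MvPolynomial.X 0) ^ k * MvPolynomial.X 1 - 1}, ?_⟩
  ext y
  simp only [Set.mem_preimage, affZeroLocus, Set.mem_setOf_eq]
  constructor
  · intro hy q hq
    obtain ⟨r, rfl⟩ := Ideal.mem_span_singleton'.mp hq
    have h0 : MvPolynomial.eval (tEmbed y) ((MvPolynomial.X 0 : MvPolynomial (Fin 2) ℂ) ^ k * MvPolynomial.X 1 - 1) = 0 := by
      have : ((y 0 : ℂ)) ^ k * (y 1 : ℂ) = 1 := by
        have h2 := congrArg (Units.val) (mem_Hsub.mp hy)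
        push_cast at h2
        exact h2
      simp [tEmbed, this]
    rw [map_mul, h0, mul_zero]
  · intro h
    have := h _ (Ideal.mem_span_singleton_self _)
    simp only [map_sub, map_mul, map_pow, MvPolynomial.eval_X, map_one] at this
    have hval : ((y 0 : ℂ)) ^ k * (y 1 : ℂ) = 1 := by
      have := sub_eq_zero.mp this
      simpa [tEmbed] using this
    exact mem_Hsub.mpr (Units.ext (by push_cast; exact hval))

open Polynomial in
/-- Clearing denominators: a one-variable polynomial representing
`t ↦ t^(k·deg p) · p(t, t⁻ᵏ)`. -/
def clearQ (k : ℕ) (p : MvPolynomial (Fin 2) ℂ) : Polynomial ℂ :=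
  ∑ d ∈ p.support, Polynomial.C (MvPolynomial.coeff d p) *
    Polynomial.X ^ (k * p.totalDegree + d 0 - k * d 1)

open Polynomial in
lemma clearQ_eval (k : ℕ) (p : MvPolynomial (Fin 2) ℂ) (t : ℂ) (ht : t ≠ 0) :
    (clearQ k p).eval t
      = t ^ (k * p.totalDegree) * MvPolynomial.eval ![t, (t⁻¹) ^ k] p := by
  rw [MvPolynomial.eval_eq', clearQ, Polynomial.eval_finset_sum, Finset.mul_sum]
  refine Finset.sum_congr rfl fun d hd => ?_
  have hd1 : d 1 ≤ p.totalDegree := by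
    refine le_trans ?_ (MvPolynomial.le_totalDegree hd)
    have : (Finsupp.sum d fun _ e => e) = ∑ i : Fin 2, d i := by
      rw [Finsupp.sum_fintype]; intro; rfl
    rw [this, Fin.sum_univ_two]; exact Nat.le_add_left _ _
  have hle : k * d 1 ≤ k * p.totalDegree := Nat.mul_le_mul_left k hd1
  have hle2 : k * d 1 ≤ k * p.totalDegree + d 0 := le_trans hle (Nat.le_add_right _ _)
  rw [Polynomial.eval_mul, Polynomial.eval_C, Polynomial.eval_pow, Polynomial.eval_X]
  rw [Fin.prod_univ_two]
  simp only [Matrix.cons_val_zero, Matrix.cons_val_one, Matrix.head_cons]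
  rw [pow_sub₀ t ht hle2, ← inv_pow, ← pow_mul, pow_add]
  ring

lemma tEmbed_pair (a b : ℂˣ) : tEmbed (![a, b] : Torus 2) = ![(a : ℂ), (b : ℂ)] := by
  funext i; fin_cases i <;> rfl

open Polynomial in
lemma Hsub_irred (k : ℕ) : TIrred (Hsub k : Set (Torus 2)) := by
  constructor
  · exact ⟨1, (Hsub k).one_mem⟩
  · rintro C₁ C₂ ⟨I₁, rfl⟩ ⟨I₂, rfl⟩ hsub
    by_contra hcon
    push_neg at hcon
    obtain ⟨h1, h2⟩ := hcon
    obtain ⟨x₁, hx₁mem, hx₁⟩ := Set.not_subset.mp h1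
    obtain ⟨x₂, hx₂mem, hx₂⟩ := Set.not_subset.mp h2
    simp only [Set.mem_preimage, affZeroLocus, Set.mem_setOf_eq, not_forall] at hx₁ hx₂
    obtain ⟨p₁, hp₁I, hp₁⟩ := hx₁
    obtain ⟨p₂, hp₂I, hp₂⟩ := hx₂
    rw [Hsub_eq_range] at hx₁mem hx₂mem
    obtain ⟨t₁, rfl⟩ := hx₁mem
    obtain ⟨t₂, rfl⟩ := hx₂mem
    -- the cleared polynomials are nonzero
    have key : ∀ (t : ℂˣ) (p : MvPolynomial (Fin 2) ℂ),
        MvPolynomial.eval (tEmbed (![t, (t⁻¹) ^ k] : Torus 2)) p ≠ 0 → clearQ k p ≠ 0 := by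
      intro t p hne hQ
      apply hne
      have ht : (t : ℂ) ≠ 0 := t.ne_zero
      have := clearQ_eval k p (t : ℂ) ht
      rw [hQ, Polynomial.eval_zero] at this
      have h0 := (mul_eq_zero.mp this.symm).resolve_left (pow_ne_zero _ ht)
      rw [tEmbed_pair]
      convert h0 using 3
      push_cast; rfl
    have hQ₁ : clearQ k p₁ ≠ 0 := key t₁ p₁ hp₁
    have hQ₂ : clearQ k p₂ ≠ 0 := key t₂ p₂ hp₂
    have hP : (Polynomial.X : Polynomial ℂ) * clearQ k p₁ * clearQ k p₂ ≠ 0 :=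
      mul_ne_zero (mul_ne_zero Polynomial.X_ne_zero hQ₁) hQ₂
    obtain ⟨t, ht⟩ := ((Polynomial.finite_setOf_isRoot hP).infinite_compl).nonempty
    simp only [Set.mem_compl_iff, Set.mem_setOf_eq, Polynomial.IsRoot,
      Polynomial.eval_mul, Polynomial.eval_X, not_or, mul_eq_zero, not_or] at ht
    obtain ⟨⟨ht0, htQ₁⟩, htQ₂⟩ := ht
    set u : ℂˣ := Units.mk0 t ht0 with hu
    have humem : (![u, (u⁻¹) ^ k] : Torus 2) ∈ (Hsub k : Set (Torus 2)) := by
      rw [Hsub_eq_range]; exact ⟨u, rfl⟩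
    have hEmbed : tEmbed (![u, (u⁻¹) ^ k] : Torus 2) = ![t, t⁻¹ ^ k] := by
      rw [tEmbed_pair]
      funext i
      fin_cases i
      · show (u : ℂ) = t; rfl
      · show (((u⁻¹) ^ k : ℂˣ) : ℂ) = t⁻¹ ^ k
        push_cast
        rfl
    rcases hsub humem with hc | hc
    · apply htQ₁
      have h0 := hc p₁ hp₁I
      rw [hEmbed] at h0
      rw [clearQ_eval k p₁ t ht0, h0, mul_zero]
    · apply htQ₂
      have h0 := hc p₂ hp₂I
      rw [hEmbed] at h0
      rw [clearQ_eval k p₂ t ht0, h0, mul_zero]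

lemma torus_smul_eq_mul {n : ℕ} (g y : Torus n) : g • y = g * y := by
  funext i
  show g i • y i = g i * y i
  ext
  push_cast [Units.smul_def]
  rfl

lemma coset_eq (k : ℕ) (c : ℂˣ) :
    {y : Torus 2 | y 0 ^ k * y 1 = c} = (![1, c] : Torus 2) • (Hsub k : Set (Torus 2)) := by
  ext y
  rw [Set.mem_smul_set_iff_inv_smul_mem, SetLike.mem_coe, mem_Hsub,
    torus_smul_eq_mul]
  simp only [Pi.mul_apply, Pi.inv_apply, Matrix.cons_val_zero,
    Matrix.cons_val_one, Matrix.head_cons, inv_one, one_mul, Set.mem_setOf_eq]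
  rw [mul_comm (c⁻¹) (y 1), ← mul_assoc, mul_inv_eq_one]

/-- **Section 5 counterexample.** Let `γ ∈ ℂˣ` be transcendental over `ℚ`, let
`Γ₁` be the torsion subgroup of `ℂˣ`, `Γ₂` the division closure of the cyclic
group generated by `γ`, and `Γ = Γ₁ × Γ₂ ⊆ (ℂˣ)²`. With
`S = {y₁y₂ = γ}` and `T = {y₁²y₂ = γ²}`:
(i) `(1,γ) ∈ S ∩ Γ` and `(1,γ²) ∈ T ∩ Γ`, so `S` and `T` are `Γ`-special;
(ii) `S ∩ T = {(γ,1)}`; (iii) `(γ,1) ∉ Γ`. In particular the intersection of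
two `Γ`-special subvarieties need not contain a point of `Γ`. -/
theorem gamma_special_intersection_counterexample (γ : ℂˣ)
    (hγ : Transcendental ℚ (γ : ℂ))
    (Γ₁ Γ₂ : Set ℂˣ) (hΓ₁ : Γ₁ = {x : ℂˣ | IsOfFinOrder x})
    (hΓ₂ : Γ₂ = {x : ℂˣ | ∃ m : ℕ, 1 ≤ m ∧ x ^ m ∈ Subgroup.zpowers γ})
    (Γ : Set (Torus 2)) (hΓ : Γ = {x : Torus 2 | x 0 ∈ Γ₁ ∧ x 1 ∈ Γ₂})
    (S T : Set (Torus 2))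
    (hS : S = {y : Torus 2 | y 0 * y 1 = γ})
    (hT : T = {y : Torus 2 | (y 0) ^ 2 * y 1 = γ ^ 2}) :
    ((![1, γ] ∈ S ∩ Γ) ∧ (![1, γ ^ 2] ∈ T ∩ Γ)) ∧
    (GammaSpecial Γ S ∧ GammaSpecial Γ T) ∧
    S ∩ T = {![γ, 1]} ∧
    ![γ, (1 : ℂˣ)] ∉ Γ ∧
    ¬ (S ∩ T ∩ Γ).Nonempty := by

  subst hS hT hΓ hΓ₁ hΓ₂
  -- membership facts
  have hmemS : (![1, γ] : Torus 2) ∈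
      ({y : Torus 2 | y 0 * y 1 = γ} ∩ {x : Torus 2 | x 0 ∈ {x : ℂˣ | IsOfFinOrder x} ∧
        x 1 ∈ {x : ℂˣ | ∃ m : ℕ, 1 ≤ m ∧ x ^ m ∈ Subgroup.zpowers γ}}) := by
    refine ⟨?_, ?_, ?_⟩
    · show (![1, γ] : Torus 2) 0 * (![1, γ] : Torus 2) 1 = γ
      simp
    · show IsOfFinOrder ((![1, γ] : Torus 2) 0)
      simpa using isOfFinOrder_one (M := ℂˣ)
    · show ∃ m : ℕ, 1 ≤ m ∧ ((![1, γ] : Torus 2) 1) ^ m ∈ Subgroup.zpowers γ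
      exact ⟨1, le_refl 1, by simpa using Subgroup.mem_zpowers γ⟩
  have hmemT : (![1, γ ^ 2] : Torus 2) ∈
      ({y : Torus 2 | (y 0) ^ 2 * y 1 = γ ^ 2} ∩ {x : Torus 2 | x 0 ∈ {x : ℂˣ | IsOfFinOrder x} ∧
        x 1 ∈ {x : ℂˣ | ∃ m : ℕ, 1 ≤ m ∧ x ^ m ∈ Subgroup.zpowers γ}}) := by
    refine ⟨?_, ?_, ?_⟩
    · show ((![1, γ ^ 2] : Torus 2) 0) ^ 2 * (![1, γ ^ 2] : Torus 2) 1 = γ ^ 2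
      simp
    · show IsOfFinOrder ((![1, γ ^ 2] : Torus 2) 0)
      simpa using isOfFinOrder_one (M := ℂˣ)
    · show ∃ m : ℕ, 1 ≤ m ∧ ((![1, γ ^ 2] : Torus 2) 1) ^ m ∈ Subgroup.zpowers γ
      exact ⟨1, le_refl 1, by simpa using Subgroup.mem_zpowers (γ ^ 2)⟩
  -- the intersection
  have hST : {y : Torus 2 | y 0 * y 1 = γ} ∩ {y : Torus 2 | (y 0) ^ 2 * y 1 = γ ^ 2}
      = {(![γ, 1] : Torus 2)} := by
    ext y
    simp only [Set.mem_inter_iff, Set.mem_setOf_eq, Set.mem_singleton_iff]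
    constructor
    · rintro ⟨h1, h2⟩
      have hy0 : y 0 = γ := by
        have h3 : y 0 * γ = γ * γ := by
          have : y 0 * (y 0 * y 1) = γ ^ 2 := by rw [← h2, pow_two, mul_assoc]
          rw [h1] at this
          rw [this, pow_two]
        exact mul_right_cancel h3
      have hy1 : y 1 = 1 := by
        rw [hy0] at h1
        exact mul_left_cancel (a := γ) (by rw [h1, mul_one])
      have hy : y = ![y 0, y 1] := by
        funext i; fin_cases i <;> rfl
      rw [hy, hy0, hy1]
    · rintro rfl
      constructor
      · show (![γ, 1] : Torus 2) 0 * (![γ, 1] : Torus 2) 1 = γ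
        simp
      · show ((![γ, 1] : Torus 2) 0) ^ 2 * (![γ, 1] : Torus 2) 1 = γ ^ 2
        simp
  -- (γ, 1) is not in Γ
  have hnotΓ : (![γ, (1 : ℂˣ)] : Torus 2) ∉
      {x : Torus 2 | x 0 ∈ {x : ℂˣ | IsOfFinOrder x} ∧
        x 1 ∈ {x : ℂˣ | ∃ m : ℕ, 1 ≤ m ∧ x ^ m ∈ Subgroup.zpowers γ}} := by
    rintro ⟨hfin, -⟩
    have hfin' : IsOfFinOrder γ := by
      simpa using hfin
    obtain ⟨n, hn, hpow⟩ := isOfFinOrder_iff_pow_eq_one.mp hfin'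
    apply hγ
    refine ⟨Polynomial.X ^ n - 1, ?_, ?_⟩
    · have hm : (Polynomial.X ^ n - 1 : Polynomial ℚ).Monic := by
        simpa using Polynomial.monic_X_pow_sub_C (1 : ℚ) hn.ne'
      exact hm.ne_zero
    · have hval : ((γ : ℂ)) ^ n = 1 := by
        have := congrArg Units.val hpow
        push_cast at this
        exact this
      simp [map_sub, map_pow, hval]
  refine ⟨⟨hmemS, hmemT⟩, ⟨?_, ?_⟩, hST, hnotΓ, ?_⟩
  · refine ⟨⟨![1, γ], Hsub 1, Hsub_closed 1, Hsub_irred 1, ?_⟩, ⟨![1, γ], hmemS⟩⟩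
    rw [← coset_eq 1 γ]
    ext y
    simp [pow_one]
  · exact ⟨⟨![1, γ ^ 2], Hsub 2, Hsub_closed 2, Hsub_irred 2,
      (coset_eq 2 (γ ^ 2)).symm ▸ rfl⟩, ⟨![1, γ ^ 2], hmemT⟩⟩
  · rintro ⟨x, hxST, hxΓ⟩
    rw [hST] at hxST
    rw [Set.mem_singleton_iff] at hxST
    subst hxST
    exact hnotΓ hxΓ

end ZP
end
end
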